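/- arXiv:1705.04357 — 2 statements merged into one kernel-verified Lean document; each statement's English description precedes it below -/
import Mathlib

section
/- Let T be a real p×p matrix, t a real p×1 column vector, and α a real 1×p row vector, and for y ≥ 0 define J(y) = ∫_0^y e^{T(y−u)} (t α) e^{T u} du (a p×p matrix). Then the matrix exponential of the 2p×2p block matrix with blocks [[T, tα],[0, T]] scaled by y satisfies exp( [[T, tα],[0, T]] · y ) = [[e^{T y}, J(y)],[0, e^{T y}]]. -/
open MeasureTheory

namespace VanLoanAux

open NormedSpace

attribute [local instance] Matrix.linftyOpSemiNormedRing Matrix.linftyOpNormedRing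
  Matrix.linftyOpNormedAlgebra

variable {p : ℕ}

noncomputable def blockL (p : ℕ) :
    (Matrix (Fin p) (Fin p) ℝ × Matrix (Fin p) (Fin p) ℝ × Matrix (Fin p) (Fin p) ℝ)
      →L[ℝ] Matrix (Fin p ⊕ Fin p) (Fin p ⊕ Fin p) ℝ :=
  LinearMap.toContinuousLinearMap
  { toFun := fun x => Matrix.fromBlocks x.1 x.2.1 0 x.2.2
    map_add' := by
      intro a b
      simp [Matrix.fromBlocks_add]
    map_smul' := by
      intro c a
      simp [Matrix.fromBlocks_smul] }

noncomputable def entryL (p : ℕ) (k l : Fin p) : Matrix (Fin p) (Fin p) ℝ →L[ℝ] ℝ :=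
  LinearMap.toContinuousLinearMap
  { toFun := fun M => M k l
    map_add' := fun _ _ => rfl
    map_smul' := fun _ _ => rfl }

lemma hasDerivAt_fromBlocks {a b d : ℝ → Matrix (Fin p) (Fin p) ℝ}
    {a' b' d' : Matrix (Fin p) (Fin p) ℝ} {x : ℝ}
    (ha : HasDerivAt a a' x) (hb : HasDerivAt b b' x) (hd : HasDerivAt d d' x) :
    HasDerivAt (fun y => Matrix.fromBlocks (a y) (b y) 0 (d y))
      (Matrix.fromBlocks a' b' 0 d') x := by
  have h := (blockL p).hasFDerivAt.comp_hasDerivAt x ((ha.prodMk (hb.prodMk hd)))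
  exact h


variable {n : Type*} [Fintype n] [DecidableEq n] (T : Matrix n n ℝ)

lemma hasDerivAt_E (s : ℝ) :
    HasDerivAt (fun u : ℝ => exp (u • T)) (T * exp (s • T)) s :=
  hasDerivAt_exp_smul_const' T s

lemma E_mul_E (s u : ℝ) : exp (s • T) * exp (u • T) = exp ((s + u) • T) := by
  rw [add_smul]
  exact (exp_add_of_commute ((Commute.refl T).smul_left s |>.smul_right u)).symm

lemma E_mul_E_neg (s : ℝ) : exp (s • T) * exp (-s • T) = 1 := by
  rw [E_mul_E, add_neg_cancel, zero_smul, exp_zero]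

lemma continuous_E : Continuous (fun u : ℝ => exp (u • T)) :=
  exp_continuous.comp (continuous_id.smul continuous_const)


theorem main (p : ℕ) (T : Matrix (Fin p) (Fin p) ℝ) (t α : Fin p → ℝ) (y : ℝ) :
    NormedSpace.exp (y • Matrix.fromBlocks T (Matrix.vecMulVec t α) 0 T)
      = Matrix.fromBlocks
          (NormedSpace.exp (y • T))
          (Matrix.of fun k l => ∫ u in (0:ℝ)..y,
            (NormedSpace.exp ((y - u) • T) * Matrix.vecMulVec t α
              * NormedSpace.exp (u • T)) k l)
          0
          (NormedSpace.exp (y • T)) := by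
  haveI : TopologicalSpace.PseudoMetrizableSpace (Matrix (Fin p) (Fin p) ℝ) :=
    inferInstanceAs (TopologicalSpace.PseudoMetrizableSpace (Fin p → Fin p → ℝ))
  set A := Matrix.vecMulVec t α with hA
  set M := Matrix.fromBlocks T A 0 T with hM
  set E : ℝ → Matrix (Fin p) (Fin p) ℝ := fun u => exp (u • T) with hE
  set f : ℝ → Matrix (Fin p) (Fin p) ℝ := fun u => E (-u) * A * E u with hf
  have hfc : Continuous f :=
    (((continuous_E T).comp continuous_neg).mul continuous_const).mul (continuous_E T)
  set K : ℝ → Matrix (Fin p) (Fin p) ℝ := fun s => ∫ u in (0:ℝ)..s, f u with hK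
  have hKderiv : ∀ s : ℝ, HasDerivAt K (f s) s := fun s =>
    intervalIntegral.integral_hasDerivAt_right (hfc.intervalIntegrable _ _)
      (hfc.stronglyMeasurableAtFilter _ _) hfc.continuousAt
  set F : ℝ → Matrix (Fin p ⊕ Fin p) (Fin p ⊕ Fin p) ℝ :=
    fun s => Matrix.fromBlocks (E s) (E s * K s) 0 (E s) with hF
  have hEf : ∀ s : ℝ, E s * f s = A * E s := by
    intro s
    rw [hf]
    calc E s * (E (-s) * A * E s) = E s * E (-s) * (A * E s) := by
          simp only [mul_assoc]
      _ = A * E s := by rw [E_mul_E_neg T s, one_mul]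
  have hFderiv : ∀ s : ℝ, HasDerivAt F (M * F s) s := by
    intro s
    have hEs : HasDerivAt E (T * E s) s := hasDerivAt_E T s
    have hB : HasDerivAt (fun u => E u * K u) (T * E s * K s + E s * f s) s :=
      hEs.mul (hKderiv s)
    have h := hasDerivAt_fromBlocks hEs hB hEs
    have heq : M * F s
        = Matrix.fromBlocks (T * E s) (T * E s * K s + E s * f s) 0 (T * E s) := by
      simp only [hM, hF]
      rw [Matrix.fromBlocks_multiply]
      simp [hEf s, mul_assoc]
    rw [heq]
    exact h
  set H : ℝ → Matrix (Fin p ⊕ Fin p) (Fin p ⊕ Fin p) ℝ := fun s => exp (-s • M) * F s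
    with hH
  have hMcomm : ∀ s : ℝ, exp (s • M) * M = M * exp (s • M) := fun s =>
    ((Commute.refl M).smul_left s).exp_left
  have hHderiv : ∀ s : ℝ, HasDerivAt H 0 s := by
    intro s
    have h1 : HasDerivAt (fun u : ℝ => exp (-u • M)) (-(M * exp (-s • M))) s := by
      have h0 : HasDerivAt (fun u : ℝ => exp (u • M)) (M * exp (-s • M)) (-s) :=
        hasDerivAt_exp_smul_const' M (-s)
      have hneg : HasDerivAt (fun u : ℝ => -u) (-1 : ℝ) s := hasDerivAt_neg s
      have := h0.scomp s hneg
      simp only [Function.comp_def, neg_smul, one_smul] at this ⊢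
      exact this
    have h2 := h1.mul (hFderiv s)
    refine h2.congr_deriv ?_
    rw [← mul_assoc, ← hMcomm (-s), neg_mul, neg_add_cancel]
  have hHconst : ∀ s : ℝ, H s = H 0 := fun s =>
    is_const_of_deriv_eq_zero (fun x => (hHderiv x).differentiableAt)
      (fun x => (hHderiv x).deriv) s 0
  have hH0 : H 0 = 1 := by
    simp only [hH, hF, hK, hE, neg_zero, zero_smul, exp_zero, one_mul,
      intervalIntegral.integral_same, mul_zero, Matrix.fromBlocks_one]
  have hFy : F y = exp (y • M) := by
    have h : H y = 1 := by rw [hHconst y, hH0]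
    have h2 : exp (y • M) * H y = exp (y • M) := by rw [h, mul_one]
    simp only [hH] at h2
    rwa [← mul_assoc, E_mul_E_neg, one_mul] at h2
  have hblock : (Matrix.of fun k l => ∫ u in (0:ℝ)..y,
      (exp ((y - u) • T) * A * exp (u • T)) k l) = E y * K y := by
    ext k l
    have hKentry : ∀ j l : Fin p, K y j l = ∫ u in (0:ℝ)..y, f u j l := by
      intro j l
      have h3 := (entryL p j l).intervalIntegral_comp_comm
        (hfc.intervalIntegrable (μ := MeasureTheory.volume) 0 y)
      exact h3.symm
    have hEyKy : (E y * K y) k l = ∑ j, E y k j * ∫ u in (0:ℝ)..y, f u j l := by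
      simp [Matrix.mul_apply, hKentry]
    rw [Matrix.of_apply, hEyKy]
    have hcm : ∀ j : Fin p, E y k j * ∫ u in (0:ℝ)..y, f u j l
        = ∫ u in (0:ℝ)..y, E y k j * f u j l := fun j =>
      (intervalIntegral.integral_const_mul _ _).symm
    simp_rw [hcm]
    rw [← intervalIntegral.integral_finset_sum]
    · congr 1
      ext u
      have hEfu : exp ((y - u) • T) * A * exp (u • T) = E y * f u := by
        rw [hf]
        calc exp ((y - u) • T) * A * exp (u • T)
            = (E y * E (-u)) * A * E u := by
              rw [E_mul_E T y (-u)]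
              norm_num [sub_eq_add_neg, hE]
          _ = E y * (E (-u) * A * E u) := by simp only [mul_assoc]
      rw [hEfu, Matrix.mul_apply]
    · intro j _
      exact (continuous_const.mul (hfc.matrix_elem j l)).intervalIntegrable 0 y
  rw [← hFy]
  show Matrix.fromBlocks (E y) (E y * K y) 0 (E y) = _
  rw [← hblock]

end VanLoanAux

/-- **Van Loan's identity.** For a real `p×p` matrix `T`, a column vector `t`, a row
vector `α`, and `y ≥ 0`, with `J(y) = ∫_0^y e^{T(y-u)} (t α) e^{T u} du`, the matrix
exponential of the block matrix `[[T, tα],[0,T]]` scaled by `y` is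
`[[e^{Ty}, J(y)],[0, e^{Ty}]]`. -/
theorem van_loan_block_exponential
    (p : ℕ) (T : Matrix (Fin p) (Fin p) ℝ) (t α : Fin p → ℝ) (y : ℝ) (hy : 0 ≤ y) :
    NormedSpace.exp (y • Matrix.fromBlocks T (Matrix.vecMulVec t α) 0 T)
      = Matrix.fromBlocks
          (NormedSpace.exp (y • T))
          (Matrix.of fun k l => ∫ u in (0:ℝ)..y,
            (NormedSpace.exp ((y - u) • T) * Matrix.vecMulVec t α
              * NormedSpace.exp (u • T)) k l)
          0
          (NormedSpace.exp (y • T)) :=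
  VanLoanAux.main p T t α y
end

section
/- Let λ > 0 and let τ be exponentially distributed with rate λ. Let N be independent of τ, taking values in a countable set {s_i : i ∈ ℕ} of positive reals with P(N = s_i) = π_i, and suppose the support of N is unbounded (for every M > 0 there exists i with s_i > M and π_i > 0). Then Y = Nτ is heavy tailed in the sense that E[e^{sY}] = ∞ for every s > 0. -/
open MeasureTheory ProbabilityTheory

/-- **Heavy-tailedness of exponential scale mixtures with unbounded scaling support.**
Let `τ ~ Exp(λ)` (i.e. `P(τ > x) = e^{-λ x}` for `x ≥ 0`) and `N` be independent of
`τ`, taking values in a countable set `{s i}` of positive reals with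
`P(N = s i) = π i`, where the support of `N` is unbounded: for every `M > 0` there
is `i` with `s i > M` and `π i > 0`. Then `Y = N·τ` is heavy tailed:
`E[e^{r Y}] = ∞` for every `r > 0`. -/
theorem exponential_scale_mixture_heavy_tailed
    {Ω : Type*} [MeasurableSpace Ω] (μ : Measure Ω) [IsProbabilityMeasure μ]
    (lam : ℝ) (hlam : 0 < lam)
    (τ N : Ω → ℝ) (hτm : Measurable τ) (hNm : Measurable N)
    (hτ0 : ∀ ω, 0 ≤ τ ω)
    (hτlaw : ∀ x : ℝ, 0 ≤ x → μ {ω | x < τ ω} = ENNReal.ofReal (Real.exp (-lam * x)))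
    (s : ℕ → ℝ) (hs : ∀ i, 0 < s i) (hsinj : Function.Injective s)
    (π : ℕ → ℝ) (hπ0 : ∀ i, 0 ≤ π i)
    (hπ : ∀ i, μ {ω | N ω = s i} = ENNReal.ofReal (π i))
    (hNval : ∀ ω, ∃ i, N ω = s i)
    (hindep : IndepFun τ N μ)
    (hub : ∀ M : ℝ, 0 < M → ∃ i, M < s i ∧ 0 < π i) :
    ∀ r : ℝ, 0 < r →
      ∫⁻ ω, ENNReal.ofReal (Real.exp (r * (N ω * τ ω))) ∂μ = ⊤ := by
  intro r hr
  obtain ⟨i, hsi, hπi⟩ := hub (lam / r) (by positivity)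
  set c := r * s i with hcdef
  have hc0 : 0 < c := by have := hs i; positivity
  have hclam : 0 < c - lam := by
    have : lam < r * s i := by
      rw [div_lt_iff₀ hr] at hsi; nlinarith
    simpa [hcdef] using sub_pos.mpr this
  refine ENNReal.eq_top_of_forall_nnreal_le fun K => ?_
  set t : ℝ := max (Real.log ((K + 1) / π i) / (c - lam)) 0 with htdef
  have ht0 : 0 ≤ t := le_max_right _ _
  have hKle : (K : ℝ) ≤ Real.exp ((c - lam) * t) * π i := by
    have h1 : Real.log ((K + 1) / π i) ≤ (c - lam) * t := by
      have h2 : Real.log ((K + 1) / π i) / (c - lam) ≤ t := le_max_left _ _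
      calc Real.log ((K + 1) / π i)
          = (c - lam) * (Real.log ((K + 1) / π i) / (c - lam)) := by
            field_simp
        _ ≤ (c - lam) * t := by
            exact mul_le_mul_of_nonneg_left h2 hclam.le
    have h3 : ((K : ℝ) + 1) / π i ≤ Real.exp ((c - lam) * t) := by
      calc ((K : ℝ) + 1) / π i = Real.exp (Real.log (((K : ℝ) + 1) / π i)) := by
            rw [Real.exp_log]; positivity
        _ ≤ Real.exp ((c - lam) * t) := Real.exp_le_exp.mpr h1
    have h4 : (K : ℝ) + 1 ≤ Real.exp ((c - lam) * t) * π i := by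
      rw [div_le_iff₀ hπi] at h3; linarith
    linarith [NNReal.coe_nonneg K]
  -- the set
  set B : Set Ω := τ ⁻¹' Set.Ioi t ∩ N ⁻¹' {s i} with hBdef
  have hBmeas : MeasurableSet B :=
    (hτm measurableSet_Ioi).inter (hNm (measurableSet_singleton _))
  have hμB : μ B = ENNReal.ofReal (Real.exp (-lam * t)) * ENNReal.ofReal (π i) := by
    rw [hBdef, hindep.measure_inter_preimage_eq_mul _ _ measurableSet_Ioi
      (measurableSet_singleton _)]
    congr 1
    · have : τ ⁻¹' Set.Ioi t = {ω | t < τ ω} := rfl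
      rw [this, hτlaw t ht0]
    · have : N ⁻¹' {s i} = {ω | N ω = s i} := rfl
      rw [this, hπ i]
  have hpt : ∀ ω, B.indicator (fun _ => ENNReal.ofReal (Real.exp (c * t))) ω
      ≤ ENNReal.ofReal (Real.exp (r * (N ω * τ ω))) := by
    intro ω
    by_cases hω : ω ∈ B
    · rw [Set.indicator_of_mem hω]
      obtain ⟨h1, h2⟩ := hω
      have hN : N ω = s i := h2
      have hτt : t < τ ω := h1
      apply ENNReal.ofReal_le_ofReal
      apply Real.exp_le_exp.mpr
      rw [hN, ← mul_assoc, ← hcdef]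
      exact mul_le_mul_of_nonneg_left hτt.le hc0.le
    · rw [Set.indicator_of_notMem hω]; exact zero_le
  calc (K : ENNReal) = ENNReal.ofReal K := by simp
    _ ≤ ENNReal.ofReal (Real.exp ((c - lam) * t) * π i) :=
        ENNReal.ofReal_le_ofReal hKle
    _ = ENNReal.ofReal (Real.exp (c * t)) * (ENNReal.ofReal (Real.exp (-lam * t))
        * ENNReal.ofReal (π i)) := by
        rw [← ENNReal.ofReal_mul (Real.exp_nonneg _), ← ENNReal.ofReal_mul
          (by positivity)]
        congr 1
        rw [← mul_assoc, ← Real.exp_add]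
        ring_nf
    _ = ENNReal.ofReal (Real.exp (c * t)) * μ B := by rw [hμB]
    _ = ∫⁻ ω, B.indicator (fun _ => ENNReal.ofReal (Real.exp (c * t))) ω ∂μ := by
        rw [lintegral_indicator hBmeas, setLIntegral_const]
    _ ≤ ∫⁻ ω, ENNReal.ofReal (Real.exp (r * (N ω * τ ω))) ∂μ :=
        lintegral_mono hpt
end
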